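/- Let M ≥ 1 be an integer and let a₁, …, a_M and w₁, …, w_M be positive real numbers. The set S = {(t(a₁ + n₁w₁), …, t(a_M + n_Mw_M)) : t ∈ ℝ, t > 0, and n₁, …, n_M are positive integers} is dense in (ℝ_{>0})^M, the set of M-tuples of positive reals with the subspace topology from ℝ^M. -/
import Mathlib


/-- For positive reals `a₁, …, a_M` and `w₁, …, w_M`, the set
`S = {(t(a₁ + n₁w₁), …, t(a_M + n_Mw_M)) : t > 0, nₖ ∈ ℤ_{>0}}` is dense in `(ℝ_{>0})^M`. -/
theorem stmt13 (M : ℕ) (hM : 1 ≤ M) (a w : Fin M → ℝ)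
    (ha : ∀ k, 0 < a k) (hw : ∀ k, 0 < w k) :
    Dense {y : {x : Fin M → ℝ // ∀ k, 0 < x k} |
      ∃ t : ℝ, 0 < t ∧ ∃ n : Fin M → ℕ, (∀ k, 0 < n k) ∧
        ∀ k, y.1 k = t * (a k + n k * w k)} := by
  have : Nonempty (Fin M) := ⟨⟨0, hM⟩⟩
  rw [Metric.dense_iff]
  intro x ε hε
  set t : ℝ := Finset.univ.inf' Finset.univ_nonempty
      (fun k => min (ε / (2 * w k)) (x.1 k / (2 * a k))) with ht
  have htpos : 0 < t := by
    rw [ht, Finset.lt_inf'_iff]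
    intro k _
    exact lt_min (div_pos hε (by have := hw k; linarith)) (div_pos (x.2 k) (by have := ha k; linarith))
  have ht1 : ∀ k, t ≤ ε / (2 * w k) := fun k =>
    le_trans (Finset.inf'_le _ (Finset.mem_univ k)) (min_le_left _ _)
  have ht2 : ∀ k, t ≤ x.1 k / (2 * a k) := fun k =>
    le_trans (Finset.inf'_le _ (Finset.mem_univ k)) (min_le_right _ _)
  set c : Fin M → ℝ := fun k => (x.1 k / t - a k) / w k with hc
  have hcpos : ∀ k, 0 < c k := by
    intro k
    apply div_pos _ (hw k)
    have h2 := ht2 k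
    rw [le_div_iff₀ (by have := ha k; linarith)] at h2
    have hx := x.2 k
    rw [sub_pos, lt_div_iff₀ htpos]
    nlinarith [ha k]
  set n : Fin M → ℕ := fun k => ⌈c k⌉₊ with hn
  have hnpos : ∀ k, 0 < n k := fun k => Nat.ceil_pos.mpr (hcpos k)
  have hzpos : ∀ k, 0 < t * (a k + (n k : ℝ) * w k) := by
    intro k
    have : (0:ℝ) ≤ (n k : ℝ) := Nat.cast_nonneg _
    have := hw k
    have := ha k
    positivity
  refine ⟨⟨fun k => t * (a k + (n k : ℝ) * w k), hzpos⟩, ?_, t, htpos, n, hnpos, fun k => rfl⟩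
  rw [Metric.mem_ball, Subtype.dist_eq, dist_pi_lt_iff hε]
  intro k
  rw [Real.dist_eq]
  have hx : x.1 k = t * (a k + c k * w k) := by
    have hwk := (hw k).ne'
    have htne := htpos.ne'
    rw [hc]
    field_simp
    ring
  have key : t * (a k + (n k : ℝ) * w k) - x.1 k = t * w k * ((n k : ℝ) - c k) := by
    rw [hx]; ring
  have h0 : (0:ℝ) ≤ (n k : ℝ) - c k := sub_nonneg.mpr (Nat.le_ceil _)
  have h1 : (n k : ℝ) - c k < 1 := by
    have := Nat.ceil_lt_add_one (le_of_lt (hcpos k))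
    simp only [hn]
    linarith
  rw [key, abs_of_nonneg (mul_nonneg (le_of_lt (mul_pos htpos (hw k))) h0)]
  have htw : t * w k ≤ ε / 2 := by
    have := ht1 k
    rw [le_div_iff₀ (by have := hw k; linarith)] at this
    linarith
  calc t * w k * ((n k : ℝ) - c k) < t * w k * 1 := by
        apply mul_lt_mul_of_pos_left h1 (mul_pos htpos (hw k))
    _ ≤ ε / 2 := by linarith
    _ < ε := by linarith
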